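/- Let I_S : L^p([0,1)) → S be a linear projection onto a finite-dimensional subspace S, and define I_{b,d,S} by (I_{b,d,S}f)(b^{−d}(j+·)) = I_S(f(b^{−d}(j+·))) for 0 ≤ j < b^d. Then for any f ∈ L^p([0,1)) and all 1 ≤ ν ≤ d, the local projection does not increase ranks: r_{ν}(I_{b,d,S} f) ≤ r_{ν}(f), where r_ν(g) := dim span{g(b^{−ν}(j+·)) : 0 ≤ j ≤ b^ν − 1}. -/

import Mathlib

/-- The `ν`-th rank of `g`: the dimension of the span of the `b^ν` pieces of `g` on the
`b`-adic intervals of level `ν`, rescaled to `[0,1)`. -/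
noncomputable def rnk (b ν : ℕ) (g : ℝ → ℝ) : ℕ :=
  Module.finrank ℝ (Submodule.span ℝ
    {h : ℝ → ℝ | ∃ j : ℕ, j < b ^ ν ∧ h = fun y => g (((j : ℝ) + y) / (b : ℝ) ^ ν)})

/-- Local projection does not increase ranks: if `I_S` is a linear projection onto a
finite-dimensional subspace `S`, and `I_{b,d,S}f` is defined piecewise by
`(I_{b,d,S}f)(b^{−d}(j+·)) = I_S(f(b^{−d}(j+·)))`, then `r_ν(I_{b,d,S}f) ≤ r_ν(f)`
for all `1 ≤ ν ≤ d`. -/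
theorem stmt17 (b d : ℕ) (hb : 2 ≤ b) (hd : 1 ≤ d)
    (S : Submodule ℝ (ℝ → ℝ)) [FiniteDimensional ℝ S]
    (IS : (ℝ → ℝ) →ₗ[ℝ] (ℝ → ℝ))
    (hrange : ∀ g : ℝ → ℝ, IS g ∈ S) (hproj : ∀ g ∈ S, IS g = g)
    (f : ℝ → ℝ) :
    ∀ ν : ℕ, 1 ≤ ν → ν ≤ d →
      rnk b ν (fun x =>
        IS (fun y => f (((⌊(b : ℝ) ^ d * x⌋ : ℝ) + y) / (b : ℝ) ^ d))
          ((b : ℝ) ^ d * x - (⌊(b : ℝ) ^ d * x⌋ : ℝ)))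
        ≤ rnk b ν f := by
  intro ν hν hνd
  set k := d - ν with hk
  have hdk : d = k + ν := (Nat.sub_add_cancel hνd).symm
  have hbpos : (0:ℝ) < (b:ℝ) := by
    have : (0:ℕ) < b := by omega
    exact_mod_cast this
  have hbν : ((b:ℝ)^ν) ≠ 0 := by positivity
  have hbk : ((b:ℝ)^k) ≠ 0 := by positivity
  have hbd : ((b:ℝ)^d) ≠ 0 := by positivity
  -- The linear operator sending a level-ν piece of f to the corresponding piece of I_{b,d,S} f.
  set T : (ℝ → ℝ) →ₗ[ℝ] (ℝ → ℝ) :=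
    { toFun := fun u => fun y =>
        IS (fun t => u (((⌊(b:ℝ)^k * y⌋ : ℝ) + t) / (b:ℝ)^k))
          ((b:ℝ)^k * y - (⌊(b:ℝ)^k * y⌋ : ℝ)),
      map_add' := by
        intro u v
        funext y
        have h : (fun t => (u + v) (((⌊(b:ℝ)^k * y⌋ : ℝ) + t) / (b:ℝ)^k))
            = (fun t => u (((⌊(b:ℝ)^k * y⌋ : ℝ) + t) / (b:ℝ)^k))
              + (fun t => v (((⌊(b:ℝ)^k * y⌋ : ℝ) + t) / (b:ℝ)^k)) := rfl
        show IS _ _ = IS _ _ + IS _ _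
        rw [h, map_add]
        rfl
      map_smul' := by
        intro c u
        funext y
        have h : (fun t => (c • u) (((⌊(b:ℝ)^k * y⌋ : ℝ) + t) / (b:ℝ)^k))
            = c • (fun t => u (((⌊(b:ℝ)^k * y⌋ : ℝ) + t) / (b:ℝ)^k)) := rfl
        show IS _ _ = c • IS _ _
        rw [h, map_smul]
        rfl } with hT
  set g : ℝ → ℝ := fun x =>
    IS (fun y => f (((⌊(b : ℝ) ^ d * x⌋ : ℝ) + y) / (b : ℝ) ^ d))
      ((b : ℝ) ^ d * x - (⌊(b : ℝ) ^ d * x⌋ : ℝ)) with hg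
  set F : Set (ℝ → ℝ) :=
    {h : ℝ → ℝ | ∃ j : ℕ, j < b ^ ν ∧ h = fun y => f (((j : ℝ) + y) / (b : ℝ) ^ ν)} with hF
  set G : Set (ℝ → ℝ) :=
    {h : ℝ → ℝ | ∃ j : ℕ, j < b ^ ν ∧ h = fun y => g (((j : ℝ) + y) / (b : ℝ) ^ ν)} with hG
  -- each piece of g is T of the corresponding piece of f
  have key : ∀ j : ℕ, (fun y => g (((j : ℝ) + y) / (b : ℝ) ^ ν))
      = T (fun y => f (((j : ℝ) + y) / (b : ℝ) ^ ν)) := by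
    intro j
    funext y
    have harg : (b:ℝ)^d * (((j:ℝ) + y) / (b:ℝ)^ν) = ((b^k * j : ℕ) : ℝ) + (b:ℝ)^k * y := by
      rw [hdk, pow_add]
      push_cast
      field_simp
    have hfloor : ⌊(b:ℝ)^d * (((j:ℝ) + y) / (b:ℝ)^ν)⌋
        = (b^k * j : ℕ) + ⌊(b:ℝ)^k * y⌋ := by
      rw [harg, Int.floor_natCast_add]
    show IS _ _ = IS _ _
    have hfun : (fun t => f (((⌊(b:ℝ)^d * (((j:ℝ) + y) / (b:ℝ)^ν)⌋ : ℝ) + t) / (b:ℝ)^d))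
        = (fun t => f (((j:ℝ) + (((⌊(b:ℝ)^k * y⌋ : ℝ) + t) / (b:ℝ)^k)) / (b:ℝ)^ν)) := by
      funext t
      congr 1
      rw [hfloor, hdk, pow_add]
      push_cast
      field_simp
      ring
    have hpt : (b:ℝ)^d * (((j:ℝ) + y) / (b:ℝ)^ν)
        - ((⌊(b:ℝ)^d * (((j:ℝ) + y) / (b:ℝ)^ν)⌋ : ℤ) : ℝ)
        = (b:ℝ)^k * y - ((⌊(b:ℝ)^k * y⌋ : ℤ) : ℝ) := by
      rw [hfloor, harg]
      push_cast
      ring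
    rw [hfun, hpt]
  -- F is finite, hence its span is finite dimensional
  have hFfin : F.Finite := by
    apply Set.Finite.subset
      (Set.Finite.image (fun j : ℕ => fun y : ℝ => f (((j : ℝ) + y) / (b : ℝ) ^ ν))
        (Set.finite_lt_nat (b ^ ν)))
    rintro h ⟨j, hj, rfl⟩
    exact ⟨j, hj, rfl⟩
  haveI : FiniteDimensional ℝ (Submodule.span ℝ F) := FiniteDimensional.span_of_finite ℝ hFfin
  have hle : Submodule.span ℝ G ≤ (Submodule.span ℝ F).map T := by
    rw [Submodule.span_le]
    rintro h ⟨j, hj, rfl⟩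
    exact ⟨(fun y => f (((j : ℝ) + y) / (b : ℝ) ^ ν)),
      Submodule.subset_span ⟨j, hj, rfl⟩, (key j).symm⟩
  calc Module.finrank ℝ (Submodule.span ℝ G)
      ≤ Module.finrank ℝ ((Submodule.span ℝ F).map T) := Submodule.finrank_mono hle
    _ ≤ Module.finrank ℝ (Submodule.span ℝ F) := Submodule.finrank_map_le T _
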